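/- arXiv:1402.3842 — 2 statements merged into one kernel-verified Lean document; each statement's English description precedes it below -/
import Mathlib

section
/- A simple permutation avoids all three of the patterns 2143, 3142, and 246135 if and only if it avoids all three of the patterns 2143, 3142, and 3412. Equivalently, the set of simple permutations in the class Av(2143, 3142, 246135) equals the set of simple permutations in the class Av(2143, 3142, 3412). -/
/-- `π` contains the pattern `σ`: there is a strictly increasing choice of positions
on which `π` is order-isomorphic to `σ`. -/
def Contains {n k : ℕ} (π : Equiv.Perm (Fin n)) (σ : Equiv.Perm (Fin k)) : Prop :=
  ∃ f : Fin k → Fin n, StrictMono f ∧ ∀ a b : Fin k, σ a < σ b ↔ π (f a) < π (f b)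

/-- `π` avoids the pattern `σ`. -/
def Avoids {n k : ℕ} (π : Equiv.Perm (Fin n)) (σ : Equiv.Perm (Fin k)) : Prop :=
  ¬ Contains π σ

/-- A permutation of length `n` is simple if it has no interval (a contiguous set of
positions whose image is a contiguous set of values) other than those of size 1 and `n`. -/
def IsSimple {n : ℕ} (π : Equiv.Perm (Fin n)) : Prop :=
  ∀ i j : Fin n, i ≤ j →
    (∃ l u : Fin n, (Finset.Icc i j).image π = Finset.Icc l u) →
    i = j ∨ ((i : ℕ) = 0 ∧ (j : ℕ) = n - 1)

noncomputable def p2143 : Equiv.Perm (Fin 4) := Equiv.ofBijective ![1, 0, 3, 2] (by decide)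
noncomputable def p3142 : Equiv.Perm (Fin 4) := Equiv.ofBijective ![2, 0, 3, 1] (by decide)
noncomputable def p246135 : Equiv.Perm (Fin 6) := Equiv.ofBijective ![1, 3, 5, 0, 2, 4] (by decide)
noncomputable def p3412 : Equiv.Perm (Fin 4) := Equiv.ofBijective ![2, 3, 0, 1] (by decide)

section Aux

variable {n : ℕ} (π : Equiv.Perm (Fin n))

/-- An occurrence of 3412 given by four explicit positions. -/
def POcc (a b c d : Fin n) : Prop :=
  a < b ∧ b < c ∧ c < d ∧ π c < π d ∧ π d < π a ∧ π a < π b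

def mk4 (a b c d : Fin n) : Fin 4 → Fin n :=
  fun i => if i.val = 0 then a else if i.val = 1 then b else if i.val = 2 then c else d

def mk6 (a b c d e f : Fin n) : Fin 6 → Fin n :=
  fun i => if i.val = 0 then a else if i.val = 1 then b else if i.val = 2 then c else
    if i.val = 3 then d else if i.val = 4 then e else f

lemma contains_3412_of (a b c d : Fin n)
    (hab : a < b) (hbc : b < c) (hcd : c < d)
    (v1 : π c < π d) (v2 : π d < π a) (v3 : π a < π b) : Contains π p3412 := by
  have m1 : (a : ℕ) < b := hab
  have m2 : (b : ℕ) < c := hbc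
  have m3 : (c : ℕ) < d := hcd
  have n1 : (π c : ℕ) < π d := v1
  have n2 : (π d : ℕ) < π a := v2
  have n3 : (π a : ℕ) < π b := v3
  refine ⟨mk4 a b c d, ?_, ?_⟩
  · rw [Fin.strictMono_iff_lt_succ]
    intro i; fin_cases i <;> simp [mk4] <;> omega
  · intro x y
    fin_cases x <;> fin_cases y <;>
      simp only [mk4, Fin.lt_def] <;> norm_num <;>
      first
        | (refine iff_of_true (by decide) (by omega))
        | (refine iff_of_false (by decide) (by omega))

/-- points p0 < p1 < p2 < p3 with π p1 < π p3 < π p0 < π p2 give a 3142 pattern. -/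
lemma contains_3142_of (a b c d : Fin n)
    (hab : a < b) (hbc : b < c) (hcd : c < d)
    (v1 : π b < π d) (v2 : π d < π a) (v3 : π a < π c) : Contains π p3142 := by
  have m1 : (a : ℕ) < b := hab
  have m2 : (b : ℕ) < c := hbc
  have m3 : (c : ℕ) < d := hcd
  have n1 : (π b : ℕ) < π d := v1
  have n2 : (π d : ℕ) < π a := v2
  have n3 : (π a : ℕ) < π c := v3
  refine ⟨mk4 a b c d, ?_, ?_⟩
  · rw [Fin.strictMono_iff_lt_succ]
    intro i; fin_cases i <;> simp [mk4] <;> omega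
  · intro x y
    fin_cases x <;> fin_cases y <;>
      simp only [mk4, Fin.lt_def] <;> norm_num <;>
      first
        | (refine iff_of_true (by decide) (by omega))
        | (refine iff_of_false (by decide) (by omega))

/-- points q0 < ... < q5 with π q3 < π q0 < π q4 < π q1 < π q5 < π q2 give 246135. -/
lemma contains_246135_of (a b c d e f : Fin n)
    (hab : a < b) (hbc : b < c) (hcd : c < d) (hde : d < e) (hef : e < f)
    (v1 : π d < π a) (v2 : π a < π e) (v3 : π e < π b) (v4 : π b < π f) (v5 : π f < π c) :
    Contains π p246135 := by
  have m1 : (a : ℕ) < b := hab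
  have m2 : (b : ℕ) < c := hbc
  have m3 : (c : ℕ) < d := hcd
  have m4 : (d : ℕ) < e := hde
  have m5 : (e : ℕ) < f := hef
  have n1 : (π d : ℕ) < π a := v1
  have n2 : (π a : ℕ) < π e := v2
  have n3 : (π e : ℕ) < π b := v3
  have n4 : (π b : ℕ) < π f := v4
  have n5 : (π f : ℕ) < π c := v5
  refine ⟨mk6 a b c d e f, ?_, ?_⟩
  · rw [Fin.strictMono_iff_lt_succ]
    intro i; fin_cases i <;> norm_num [mk6] <;> omega
  · intro x y
    fin_cases x <;> fin_cases y <;>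
      simp only [mk6, Fin.lt_def] <;> norm_num <;>
      first
        | (refine iff_of_true (by decide) (by omega))
        | (refine iff_of_false (by decide) (by omega))

lemma pocc_of_contains_3412 (h : Contains π p3412) : ∃ a b c d, POcc π a b c d := by
  obtain ⟨f, hf, hiff⟩ := h
  exact ⟨f 0, f 1, f 2, f 3, hf (by decide), hf (by decide), hf (by decide),
    (hiff 2 3).mp (by decide), (hiff 3 0).mp (by decide), (hiff 0 1).mp (by decide)⟩

lemma contains_3412_of_contains_246135 (h : Contains π p246135) : Contains π p3412 := by
  obtain ⟨f, hf, hiff⟩ := h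
  exact contains_3412_of π (f 1) (f 2) (f 3) (f 4) (hf (by decide)) (hf (by decide))
    (hf (by decide)) ((hiff 3 4).mp (by decide)) ((hiff 4 1).mp (by decide))
    ((hiff 1 2).mp (by decide))

end Aux

section Interval

variable {n : ℕ} (π : Equiv.Perm (Fin n))

/-- If every position outside `[i,j]` has value entirely below or entirely above the
values on `[i,j]`, then the image of `[i,j]` is a value interval; simplicity then forces
a contradiction when `[i,j]` is proper and nontrivial. -/
lemma interval_contra (hπ : IsSimple π) (i j : Fin n)
    (hij : i ≤ j) (hne : i ≠ j) (hproper : (i : ℕ) ≠ 0 ∨ (j : ℕ) ≠ n - 1)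
    (h : ∀ z, z ∉ Finset.Icc i j →
      (∀ x ∈ Finset.Icc i j, π z < π x) ∨ (∀ x ∈ Finset.Icc i j, π x < π z)) :
    False := by
  classical
  have hmem : i ∈ Finset.Icc i j := Finset.mem_Icc.mpr ⟨le_refl i, hij⟩
  have hne' : ((Finset.Icc i j).image π).Nonempty := ⟨π i, Finset.mem_image_of_mem π hmem⟩
  set l := ((Finset.Icc i j).image π).min' hne' with hl
  set u := ((Finset.Icc i j).image π).max' hne' with hu
  obtain ⟨pl, hplm, hplv⟩ := Finset.mem_image.mp (Finset.min'_mem _ hne')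
  obtain ⟨pu, hpum, hpuv⟩ := Finset.mem_image.mp (Finset.max'_mem _ hne')
  have himg : (Finset.Icc i j).image π = Finset.Icc l u := by
    apply Finset.Subset.antisymm
    · intro v hv
      exact Finset.mem_Icc.mpr ⟨Finset.min'_le _ _ hv, Finset.le_max' _ _ hv⟩
    · intro v hv
      obtain ⟨hlv, hvu⟩ := Finset.mem_Icc.mp hv
      by_cases hmem2 : π.symm v ∈ Finset.Icc i j
      · have : π (π.symm v) = v := π.apply_symm_apply v
        exact this ▸ Finset.mem_image_of_mem π hmem2
      · exfalso
        rcases h _ hmem2 with hlow | hhigh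
        · have h1 := hlow pl hplm
          rw [π.apply_symm_apply, hplv] at h1
          exact absurd h1 (not_lt.mpr hlv)
        · have h1 := hhigh pu hpum
          rw [π.apply_symm_apply, hpuv] at h1
          exact absurd h1 (not_lt.mpr hvu)
  rcases hπ i j hij ⟨l, u, himg⟩ with h1 | h2
  · exact hne h1
  · rcases hproper with h3 | h3
    · exact h3 h2.1
    · exact h3 h2.2

end Interval

section LemmaA

variable {n : ℕ} (π : Equiv.Perm (Fin n))

/-- LEMMA A: if `(a,b,c,d)` is a 3412-occurrence with `π c` minimal among all
occurrences, in a simple permutation avoiding 3142, then there is a point `e`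
before `a` with value strictly between `π c` and `π d`. -/
lemma lemmaA (h3142 : Avoids π p3142) (hπ : IsSimple π) (a b c d : Fin n)
    (hocc : POcc π a b c d)
    (hmin : ∀ a' b' c' d', POcc π a' b' c' d' → π c ≤ π c') :
    ∃ e, e < a ∧ π c < π e ∧ π e < π d := by
  classical
  obtain ⟨hab, hbc, hcd, v1, v2, v3⟩ := hocc
  by_contra hp0
  push_neg at hp0
  set S : Finset (Fin n) := Finset.univ.filter (fun x => π c ≤ π x ∧ π x ≤ π d) with hS
  have hcS : c ∈ S := by
    simp only [hS, Finset.mem_filter, Finset.mem_univ, true_and]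
    exact ⟨le_refl _, le_of_lt v1⟩
  have hSne : S.Nonempty := ⟨c, hcS⟩
  set i := S.min' hSne with hidef
  have hiS : π c ≤ π i ∧ π i ≤ π d := by
    have := Finset.min'_mem S hSne
    simpa [hS] using this
  have himin : ∀ x : Fin n, π c ≤ π x → π x ≤ π d → i ≤ x := by
    intro x h1 h2
    exact Finset.min'_le S x (by simp [hS, h1, h2])
  have hic : i ≤ c := Finset.min'_le S c hcS
  have hbi : b < i := by
    rcases lt_trichotomy i b with h | h | h
    · rcases lt_trichotomy i a with h2 | h2 | h2
      · rcases eq_or_lt_of_le hiS.1 with he | hlt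
        · exact absurd (π.injective he) (ne_of_gt (lt_trans (lt_trans h2 hab) hbc))
        · rcases eq_or_lt_of_le hiS.2 with he2 | hlt2
          · exact absurd (π.injective he2)
              (ne_of_lt (lt_trans (lt_trans (lt_trans h2 hab) hbc) hcd))
          · exact absurd (hp0 i h2 hlt) (not_le.mpr hlt2)
      · exact absurd (h2 ▸ hiS.2) (not_le.mpr v2)
      · refine absurd (contains_3142_of π a i b d h2 h (lt_trans hbc hcd) ?_ v2 v3) h3142
        exact lt_of_le_of_ne hiS.2
          (fun hh => (ne_of_lt (lt_trans (lt_trans h hbc) hcd)) (π.injective hh))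
    · exact absurd (h ▸ hiS.2) (not_le.mpr (lt_trans v2 v3))
    · exact h
  have hai : a < i := lt_trans hab hbi
  -- minimum of values on [i,d] is γ = π c
  have hγlb : ∀ x ∈ Finset.Icc i d, π c ≤ π x := by
    intro x hx
    by_contra hxc
    push_neg at hxc
    obtain ⟨hix, hxd⟩ := Finset.mem_Icc.mp hx
    have hxc' : x ≠ c := fun hh => absurd hxc (by rw [hh]; exact lt_irrefl _)
    have hbx : b < x := lt_of_lt_of_le hbi hix
    rcases lt_or_gt_of_ne hxc' with hh | hh
    · exact absurd (hmin a b x c ⟨hab, hbx, hh, hxc, lt_trans v1 v2, v3⟩)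
        (not_le.mpr hxc)
    · have hxd' : x < d := lt_of_le_of_ne hxd
        (fun heq => (ne_of_lt (lt_trans hxc v1)) (congrArg π heq))
      exact absurd (hmin a b x d ⟨hab, hbx, hxd', lt_trans hxc v1, v2, v3⟩)
        (not_le.mpr hxc)
  -- base invariant at j = d
  have base : ∀ y, y < i →
      (∀ x ∈ Finset.Icc i d, π y < π x) ∨ (∀ x ∈ Finset.Icc i d, π x < π y) := by
    intro y hyi
    by_cases h1 : π y < π c
    · exact Or.inl (fun x hx => lt_of_lt_of_le h1 (hγlb x hx))
    · push_neg at h1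
      by_cases h2 : π y ≤ π d
      · exact absurd (himin y h1 h2) (not_le.mpr hyi)
      · push_neg at h2
        right
        intro m hm
        by_contra hcon
        push_neg at hcon
        obtain ⟨him, hmd⟩ := Finset.mem_Icc.mp hm
        have hym : π y < π m := lt_of_le_of_ne hcon
          (fun hh => (ne_of_lt (lt_of_lt_of_le hyi him)) (π.injective hh))
        have hmd' : m < d := lt_of_le_of_ne hmd
          (fun heq => (ne_of_gt (lt_trans h2 hym)) (congrArg π heq))
        have him' : i < m := lt_of_le_of_ne him
          (fun heq => by rw [heq] at hiS; exact absurd hiS.2 (not_le.mpr (lt_trans h2 hym)))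
        have hid : π i < π d := lt_of_le_of_ne hiS.2
          (fun hh => (ne_of_lt (lt_of_le_of_lt hic hcd)) (π.injective hh))
        exact h3142 (contains_3142_of π y i m d hyi him' hmd' hid h2 hym)
  -- descent
  have main : ∀ m : ℕ, ∀ j : Fin n, d ≤ j → n - (j : ℕ) ≤ m →
      (∀ y, y < i → (∀ x ∈ Finset.Icc i j, π y < π x) ∨ (∀ x ∈ Finset.Icc i j, π x < π y)) →
      False := by
    intro m
    induction m with
    | zero =>
      intro j _ hfuel _
      have := j.isLt; omega
    | succ m ih =>
      intro j hdj hfuel hinv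
      have hij : i ≤ j := le_trans hic (le_trans (le_of_lt hcd) hdj)
      have hcj : c ∈ Finset.Icc i j :=
        Finset.mem_Icc.mpr ⟨hic, le_trans (le_of_lt hcd) hdj⟩
      by_cases hz : ∃ z, z ∉ Finset.Icc i j ∧ (∃ x1 ∈ Finset.Icc i j, π x1 < π z)
          ∧ (∃ x2 ∈ Finset.Icc i j, π z < π x2)
      · obtain ⟨z, hzm, ⟨x1, hx1m, hx1v⟩, ⟨x2, hx2m, hx2v⟩⟩ := hz
        rw [Finset.mem_Icc, not_and_or, not_le, not_le] at hzm
        rcases hzm with hzi | hjz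
        · rcases hinv z hzi with hL | hR
          · exact absurd hx1v (not_lt.mpr (le_of_lt (hL x1 hx1m)))
          · exact absurd hx2v (not_lt.mpr (le_of_lt (hR x2 hx2m)))
        · refine ih z (le_trans hdj (le_of_lt hjz)) ?_ ?_
          · have h1 : (j : ℕ) < (z : ℕ) := hjz
            have := z.isLt; omega
          · intro y hyi
            by_contra hcon
            rw [not_or] at hcon
            obtain ⟨hc1, hc2⟩ := hcon
            push_neg at hc1 hc2
            obtain ⟨x1', hx1'm, hx1'le⟩ := hc1
            obtain ⟨x2', hx2'm, hx2'le⟩ := hc2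
            have hynotin : y ∉ Finset.Icc i z := by
              rw [Finset.mem_Icc]; exact fun hh => absurd hyi (not_lt.mpr hh.1)
            have h1s : π x1' < π y := lt_of_le_of_ne hx1'le
              (fun hh => hynotin (by rw [← π.injective hh]; exact hx1'm))
            have h2s : π y < π x2' := lt_of_le_of_ne hx2'le
              (fun hh => hynotin (by rw [π.injective hh]; exact hx2'm))
            obtain ⟨hx1'i, hx1'z⟩ := Finset.mem_Icc.mp hx1'm
            obtain ⟨hx2'i, hx2'z⟩ := Finset.mem_Icc.mp hx2'm
            obtain ⟨hx1i, hx1j⟩ := Finset.mem_Icc.mp hx1m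
            rcases hinv y hyi with hL | hR
            · -- Case L: y below everything on [i,j]; new occurrence (a,b,x1',z)
              have hx1'nj : x1' ∉ Finset.Icc i j := fun hm =>
                absurd (hL x1' hm) (not_lt.mpr (le_of_lt h1s))
              have hjx1' : j < x1' := by
                rw [Finset.mem_Icc, not_and_or, not_le, not_le] at hx1'nj
                rcases hx1'nj with hh | hh
                · exact absurd hx1'i (not_le.mpr hh)
                · exact hh
              have hv_w_z : π x1' < π z := lt_trans h1s (lt_trans (hL x1 hx1m) hx1v)
              have hza : π z < π a := by
                rcases hinv a hai with hLa | hRa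
                · exact absurd (hLa c hcj) (not_lt.mpr (le_of_lt (lt_trans v1 v2)))
                · exact lt_trans hx2v (hRa x2 hx2m)
              have hbx1' : b < x1' :=
                lt_trans (lt_trans hbc hcd) (lt_of_le_of_lt hdj hjx1')
              have hx1'z' : x1' < z := lt_of_le_of_ne hx1'z
                (fun hh => (ne_of_lt hv_w_z) (congrArg π hh))
              have hlt : π x1' < π c := lt_trans h1s (hL c hcj)
              exact absurd (hmin a b x1' z ⟨hab, hbx1', hx1'z', hv_w_z, hza, v3⟩)
                (not_le.mpr hlt)
            · -- Case R: 3142 on (y, x1, x2', z)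
              have hx2'nj : x2' ∉ Finset.Icc i j := fun hm =>
                absurd (hR x2' hm) (not_lt.mpr (le_of_lt h2s))
              have hjx2' : j < x2' := by
                rw [Finset.mem_Icc, not_and_or, not_le, not_le] at hx2'nj
                rcases hx2'nj with hh | hh
                · exact absurd hx2'i (not_le.mpr hh)
                · exact hh
              have hzy : π z < π y := lt_trans hx2v (hR x2 hx2m)
              have hx2'z' : x2' < z := lt_of_le_of_ne hx2'z
                (fun hh => (ne_of_lt (lt_trans hzy h2s)).symm (congrArg π hh))
              exact h3142 (contains_3142_of π y x1 x2' z
                (lt_of_lt_of_le hyi hx1i) (lt_of_le_of_lt hx1j hjx2') hx2'z'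
                hx1v hzy h2s)
      · -- no extension possible: [i,j] is an interval
        push_neg at hz
        refine interval_contra π hπ i j hij ?_ ?_ ?_
        · exact ne_of_lt (lt_of_le_of_lt hic (lt_of_lt_of_le hcd hdj))
        · left
          have h1 : (a : ℕ) < b := hab
          have h2 : (b : ℕ) < i := hbi
          omega
        · intro z hznot
          by_cases hup : ∃ x1 ∈ Finset.Icc i j, π x1 < π z
          · obtain ⟨x1, hm, hv⟩ := hup
            right
            intro x hx
            have hle := hz z hznot ⟨x1, hm, hv⟩ x hx
            exact lt_of_le_of_ne hle (fun hh => hznot (by rw [← π.injective hh]; exact hx))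
          · push_neg at hup
            left
            intro x hx
            exact lt_of_le_of_ne (hup x hx) (fun hh => hznot (by rw [π.injective hh]; exact hx))
  exact main n d le_rfl (by omega) base

end LemmaA

section LemmaB

variable {n : ℕ} (π : Equiv.Perm (Fin n))

/-- LEMMA B: if `(a,b,c,d)` is a 3412-occurrence extendable on the left (point `e`)
and with `π b` maximal among all such left-extendable occurrences, in a simple
permutation avoiding 3142, then it is also extendable on the right. -/
lemma lemmaB (h3142 : Avoids π p3142) (hπ : IsSimple π) (a b c d e : Fin n)
    (hocc : POcc π a b c d) (hea : e < a) (he1 : π c < π e) (he2 : π e < π d)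
    (hmax : ∀ a' b' c' d' e', POcc π a' b' c' d' → e' < a' → π c' < π e' → π e' < π d' →
      π b' ≤ π b) :
    ∃ f, d < f ∧ π a < π f ∧ π f < π b := by
  classical
  obtain ⟨hab, hbc, hcd, v1, v2, v3⟩ := hocc
  by_contra hp5
  push_neg at hp5
  set T : Finset (Fin n) := Finset.univ.filter (fun x => π a ≤ π x ∧ π x ≤ π b) with hT
  have hbT : b ∈ T := by
    simp only [hT, Finset.mem_filter, Finset.mem_univ, true_and]
    exact ⟨le_of_lt v3, le_refl _⟩
  have hTne : T.Nonempty := ⟨b, hbT⟩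
  set i' := T.max' hTne with hi'def
  have hiT : π a ≤ π i' ∧ π i' ≤ π b := by
    have := Finset.max'_mem T hTne
    simpa [hT] using this
  have himax : ∀ x : Fin n, π a ≤ π x → π x ≤ π b → x ≤ i' := by
    intro x h1 h2
    exact Finset.le_max' T x (by simp [hT, h1, h2])
  have hbi : b ≤ i' := Finset.le_max' T b hbT
  have hαi : π a < π i' := lt_of_le_of_ne hiT.1
    (fun hh => (ne_of_lt (lt_of_lt_of_le hab hbi)) (π.injective hh))
  have hi'c : i' < c := by
    rcases lt_or_ge i' c with h | h
    · exact h
    · exfalso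
      rcases eq_or_lt_of_le h with he' | hlt
      · rw [← he'] at hiT
        exact absurd hiT.1 (not_le.mpr (lt_trans v1 v2))
      · rcases lt_trichotomy i' d with h2 | h2 | h2
        · exact h3142 (contains_3142_of π a c i' d (lt_trans hab hbc) hlt h2 v1 v2 hαi)
        · rw [h2] at hiT
          exact absurd hiT.1 (not_le.mpr v2)
        · have hble := hp5 i' h2 hαi
          have hne : π i' ≠ π b := fun hh =>
            (ne_of_gt (lt_trans (lt_trans hbc hcd) h2)) (π.injective hh)
          exact absurd hiT.2 (not_le.mpr (lt_of_le_of_ne hble (Ne.symm hne)))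
  -- Q2 base on [a, i']
  have hQ2a : ∀ x, a ≤ x → x ≤ i' → π d < π x := by
    intro x hax hxi'
    by_contra hcon
    push_neg at hcon
    have hxd : π x < π d := lt_of_le_of_ne hcon
      (fun hh => (ne_of_lt (lt_of_le_of_lt hxi' (lt_trans hi'c hcd))) (π.injective hh))
    have hxa : a < x := lt_of_le_of_ne hax
      (fun heq => by rw [← heq] at hxd; exact absurd hxd (not_lt.mpr (le_of_lt v2)))
    rcases lt_trichotomy x b with h | h | h
    · exact h3142 (contains_3142_of π a x b d hxa h (lt_trans hbc hcd) hxd v2 v3)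
    · rw [h] at hxd
      exact absurd hxd (not_lt.mpr (le_of_lt (lt_trans v2 v3)))
    · have hxi'' : x < i' := lt_of_le_of_ne hxi'
        (fun heq => by rw [heq] at hxd; exact absurd hxd (not_lt.mpr (le_of_lt (lt_trans v2 hαi))))
      exact h3142 (contains_3142_of π a x i' d hxa hxi'' (lt_trans hi'c hcd) hxd v2 hαi)
  -- Q1 base on [a, i']
  have hQ1a : ∀ y, i' < y →
      (∀ x ∈ Finset.Icc a i', π y < π x) ∨ (∀ x ∈ Finset.Icc a i', π x < π y) := by
    intro y hy
    by_contra hcon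
    rw [not_or] at hcon
    obtain ⟨hc1, hc2⟩ := hcon
    push_neg at hc1 hc2
    obtain ⟨x1', hx1'm, hx1'le⟩ := hc1
    obtain ⟨x2', hx2'm, hx2'le⟩ := hc2
    have hynotin : y ∉ Finset.Icc a i' := by
      rw [Finset.mem_Icc]; exact fun hh => absurd hy (not_lt.mpr hh.2)
    have h1s : π x1' < π y := lt_of_le_of_ne hx1'le
      (fun hh => hynotin (by rw [← π.injective hh]; exact hx1'm))
    have h2s : π y < π x2' := lt_of_le_of_ne hx2'le
      (fun hh => hynotin (by rw [π.injective hh]; exact hx2'm))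
    obtain ⟨hax1', hx1'i⟩ := Finset.mem_Icc.mp hx1'm
    obtain ⟨hax2', hx2'i⟩ := Finset.mem_Icc.mp hx2'm
    by_cases hyb : π b ≤ π y
    · have hax2'' : a < x2' := lt_of_le_of_ne hax2'
        (fun heq => by rw [← heq] at h2s
                       exact absurd h2s (not_lt.mpr (le_of_lt (lt_of_lt_of_le v3 hyb))))
      have hocc2 : POcc π a x2' c d :=
        ⟨hax2'', lt_of_le_of_lt hx2'i hi'c, hcd, v1, v2,
          lt_trans (lt_of_lt_of_le v3 hyb) h2s⟩
      exact absurd (hmax a x2' c d e hocc2 hea he1 he2)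
        (not_le.mpr (lt_of_le_of_lt hyb h2s))
    · push_neg at hyb
      by_cases hya : π a ≤ π y
      · exact absurd (himax y hya (le_of_lt hyb)) (not_le.mpr hy)
      · push_neg at hya
        have hax1'' : a < x1' := lt_of_le_of_ne hax1'
          (fun heq => by rw [← heq] at h1s; exact absurd h1s (not_lt.mpr (le_of_lt hya)))
        have hx1'i'' : x1' < i' := lt_of_le_of_ne hx1'i
          (fun heq => by rw [heq] at h1s
                         exact absurd (lt_trans h1s hya) (not_lt.mpr (le_of_lt hαi)))
        exact h3142 (contains_3142_of π a x1' i' y hax1'' hx1'i'' hy h1s hya hαi)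
  -- descent downward on j
  have main : ∀ m : ℕ, ∀ j : Fin n, j ≤ a → (j : ℕ) < m →
      ((∀ x, j ≤ x → x ≤ i' → π d < π x) ∧
       (∀ y, i' < y →
         (∀ x ∈ Finset.Icc j i', π y < π x) ∨ (∀ x ∈ Finset.Icc j i', π x < π y))) →
      False := by
    intro m
    induction m with
    | zero => intro j _ hfuel _; omega
    | succ m ih =>
      intro j hja hfuel hQ
      obtain ⟨hQ2, hQ1⟩ := hQ
      have hji : j ≤ i' := le_trans hja (le_trans (le_of_lt hab) hbi)
      have hbmem : b ∈ Finset.Icc j i' :=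
        Finset.mem_Icc.mpr ⟨le_trans hja (le_of_lt hab), hbi⟩
      by_cases hz : ∃ z, z ∉ Finset.Icc j i' ∧ (∃ x1 ∈ Finset.Icc j i', π x1 < π z)
          ∧ (∃ x2 ∈ Finset.Icc j i', π z < π x2)
      · obtain ⟨z, hzm, ⟨x1, hx1m, hx1v⟩, ⟨x2, hx2m, hx2v⟩⟩ := hz
        rw [Finset.mem_Icc, not_and_or, not_le, not_le] at hzm
        rcases hzm with hzj | hi'z
        · -- z < j : extend the window to the left
          obtain ⟨hjx1, hx1i⟩ := Finset.mem_Icc.mp hx1m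
          obtain ⟨hjx2, hx2i⟩ := Finset.mem_Icc.mp hx2m
          have hπzd : π d < π z := lt_trans (hQ2 x1 hjx1 hx1i) hx1v
          have hQ2z : ∀ x, z ≤ x → x ≤ i' → π d < π x := by
            intro x hzx hxi
            by_cases hjx : j ≤ x
            · exact hQ2 x hjx hxi
            · push_neg at hjx
              by_contra hcon
              push_neg at hcon
              have hxd : π x < π d := lt_of_le_of_ne hcon
                (fun hh => (ne_of_lt (lt_trans (lt_of_lt_of_le hjx hja)
                  (lt_trans hab (lt_trans hbc hcd)))) (π.injective hh))
              have hzx' : z < x := lt_of_le_of_ne hzx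
                (fun heq => by rw [← heq] at hxd
                               exact absurd hxd (not_lt.mpr (le_of_lt hπzd)))
              exact h3142 (contains_3142_of π z x x2 d hzx' (lt_of_lt_of_le hjx hjx2)
                (lt_of_le_of_lt hx2i (lt_trans hi'c hcd)) hxd hπzd hx2v)
          have hQ1z : ∀ y, i' < y →
              (∀ x ∈ Finset.Icc z i', π y < π x) ∨ (∀ x ∈ Finset.Icc z i', π x < π y) := by
            intro y hy
            by_contra hcon
            rw [not_or] at hcon
            obtain ⟨hc1, hc2⟩ := hcon
            push_neg at hc1 hc2
            obtain ⟨x1', hx1'm, hx1'le⟩ := hc1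
            obtain ⟨x2', hx2'm, hx2'le⟩ := hc2
            have hynotin : y ∉ Finset.Icc z i' := by
              rw [Finset.mem_Icc]; exact fun hh => absurd hy (not_lt.mpr hh.2)
            have h1s : π x1' < π y := lt_of_le_of_ne hx1'le
              (fun hh => hynotin (by rw [← π.injective hh]; exact hx1'm))
            have h2s : π y < π x2' := lt_of_le_of_ne hx2'le
              (fun hh => hynotin (by rw [π.injective hh]; exact hx2'm))
            obtain ⟨hzx1', hx1'i⟩ := Finset.mem_Icc.mp hx1'm
            obtain ⟨hzx2', hx2'i⟩ := Finset.mem_Icc.mp hx2'm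
            rcases hQ1 y hy with hL | hR
            · have hx1'nj : x1' ∉ Finset.Icc j i' := fun hm =>
                absurd (hL x1' hm) (not_lt.mpr (le_of_lt h1s))
              have hx1'j : x1' < j := by
                rw [Finset.mem_Icc, not_and_or, not_le, not_le] at hx1'nj
                rcases hx1'nj with hh | hh
                · exact hh
                · exact absurd hx1'i (not_le.mpr hh)
              have hyz : π y < π z := lt_trans (hL x1 hx1m) hx1v
              have hzx1'' : z < x1' := lt_of_le_of_ne hzx1'
                (fun heq => by rw [← heq] at h1s
                               exact absurd h1s (not_lt.mpr (le_of_lt hyz)))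
              exact h3142 (contains_3142_of π z x1' x2 y hzx1''
                (lt_of_lt_of_le hx1'j hjx2) (lt_of_le_of_lt hx2i hy) h1s hyz hx2v)
            · have hx2'nj : x2' ∉ Finset.Icc j i' := fun hm =>
                absurd (hR x2' hm) (not_lt.mpr (le_of_lt h2s))
              have hx2'j : x2' < j := by
                rw [Finset.mem_Icc, not_and_or, not_le, not_le] at hx2'nj
                rcases hx2'nj with hh | hh
                · exact hh
                · exact absurd hx2'i (not_le.mpr hh)
              have hzy : π z < π y := lt_trans hx2v (hR x2 hx2m)
              have hzx2'' : z < x2' := lt_of_le_of_ne hzx2'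
                (fun heq => by rw [← heq] at h2s
                               exact absurd h2s (not_lt.mpr (le_of_lt hzy)))
              have hocc2 : POcc π z x2' c d :=
                ⟨hzx2'', lt_trans hx2'j (lt_of_le_of_lt hja (lt_trans hab hbc)), hcd,
                  v1, hπzd, lt_trans hzy h2s⟩
              have hez : e < z := by
                by_contra hcon2
                push_neg at hcon2
                have := hQ2z e hcon2 (le_trans (le_of_lt (lt_trans hea hab)) hbi)
                exact absurd this (not_lt.mpr (le_of_lt he2))
              have hble := hmax z x2' c d e hocc2 hez he1 he2
              have hby : π b < π y := hR b hbmem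
              exact absurd hble (not_le.mpr (lt_trans hby h2s))
          refine ih z (le_trans (le_of_lt hzj) hja) ?_ ⟨hQ2z, hQ1z⟩
          have h1 : (z : ℕ) < j := hzj
          omega
        · rcases hQ1 z hi'z with hL | hR
          · exact absurd hx1v (not_lt.mpr (le_of_lt (hL x1 hx1m)))
          · exact absurd hx2v (not_lt.mpr (le_of_lt (hR x2 hx2m)))
      · -- no extension possible: [j, i'] is an interval
        push_neg at hz
        refine interval_contra π hπ j i' hji ?_ ?_ ?_
        · exact ne_of_lt (lt_of_le_of_lt hja (lt_of_lt_of_le hab hbi))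
        · right
          have h1 : (i' : ℕ) < c := hi'c
          have h2 : (c : ℕ) < d := hcd
          have := d.isLt
          omega
        · intro z hznot
          by_cases hup : ∃ x1 ∈ Finset.Icc j i', π x1 < π z
          · obtain ⟨x1, hm, hv⟩ := hup
            right
            intro x hx
            have hle := hz z hznot ⟨x1, hm, hv⟩ x hx
            exact lt_of_le_of_ne hle (fun hh => hznot (by rw [← π.injective hh]; exact hx))
          · push_neg at hup
            left
            intro x hx
            exact lt_of_le_of_ne (hup x hx)
              (fun hh => hznot (by rw [π.injective hh]; exact hx))
  exact main n a le_rfl a.isLt ⟨hQ2a, hQ1a⟩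

end LemmaB

theorem simples_of_av_2143_3142_246135_eq_simples_of_av_2143_3142_3412
    (n : ℕ) (π : Equiv.Perm (Fin n)) (hπ : IsSimple π) :
    (Avoids π p2143 ∧ Avoids π p3142 ∧ Avoids π p246135) ↔
      (Avoids π p2143 ∧ Avoids π p3142 ∧ Avoids π p3412) := by
  constructor
  · rintro ⟨h1, h2, h3⟩
    refine ⟨h1, h2, ?_⟩
    intro hcont
    apply h3
    classical
    obtain ⟨a0, b0, c0, d0, hocc0⟩ := pocc_of_contains_3412 π hcont
    -- choose an occurrence with minimal γ = π c
    set S1 : Finset (Fin n) := Finset.univ.filter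
      (fun v => ∃ a b c d, POcc π a b c d ∧ π c = v) with hS1
    have hS1ne : S1.Nonempty := by
      refine ⟨π c0, ?_⟩
      simp only [hS1, Finset.mem_filter, Finset.mem_univ, true_and]
      exact ⟨a0, b0, c0, d0, hocc0, rfl⟩
    have hmem1 := Finset.mem_filter.mp (Finset.min'_mem S1 hS1ne)
    obtain ⟨-, a1, b1, c1, d1, hocc1, hγ1⟩ := hmem1
    have hmin1 : ∀ a' b' c' d', POcc π a' b' c' d' → π c1 ≤ π c' := by
      intro a' b' c' d' h'
      rw [hγ1]
      refine Finset.min'_le S1 (π c') ?_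
      simp only [hS1, Finset.mem_filter, Finset.mem_univ, true_and]
      exact ⟨a', b', c', d', h', rfl⟩
    obtain ⟨e1, he1a, he11, he12⟩ := lemmaA π h2 hπ a1 b1 c1 d1 hocc1 hmin1
    -- among left-extendable occurrences choose one with maximal β = π b
    set S2 : Finset (Fin n) := Finset.univ.filter
      (fun v => ∃ a b c d e, POcc π a b c d ∧ e < a ∧ π c < π e ∧ π e < π d ∧ π b = v)
      with hS2
    have hS2ne : S2.Nonempty := by
      refine ⟨π b1, ?_⟩
      simp only [hS2, Finset.mem_filter, Finset.mem_univ, true_and]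
      exact ⟨a1, b1, c1, d1, e1, hocc1, he1a, he11, he12, rfl⟩
    have hmem2 := Finset.mem_filter.mp (Finset.max'_mem S2 hS2ne)
    obtain ⟨-, a, b, c, d, e, hocc, hea, hev1, hev2, hβ⟩ := hmem2
    have hmax : ∀ a' b' c' d' e', POcc π a' b' c' d' → e' < a' → π c' < π e' →
        π e' < π d' → π b' ≤ π b := by
      intro a' b' c' d' e' h' hh1 hh2 hh3
      rw [hβ]
      refine Finset.le_max' S2 (π b') ?_
      simp only [hS2, Finset.mem_filter, Finset.mem_univ, true_and]
      exact ⟨a', b', c', d', e', h', hh1, hh2, hh3, rfl⟩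
    obtain ⟨f, hdf, hf1, hf2⟩ := lemmaB π h2 hπ a b c d e hocc hea hev1 hev2 hmax
    obtain ⟨hab, hbc, hcd, w1, w2, w3⟩ := hocc
    exact contains_246135_of π e a b c d f hea hab hbc hcd hdf hev1 hev2 w2 hf1 hf2
  · rintro ⟨h1, h2, h4⟩
    exact ⟨h1, h2, fun hc => h4 (contains_3412_of_contains_246135 π hc)⟩
end

section
/- Every sum decomposable permutation that avoids all three of the patterns 2143, 3142, and 246135 is of the form 1 ⊕ τ or τ ⊕ 1 for some permutation τ; that is, for every sum decomposable permutation π of length n ≥ 2 avoiding 2143, 3142, and 246135, either π(1) = 1 or π(n) = n. -/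
/-- A permutation of length `n` is sum decomposable if some proper nonempty prefix of
positions is mapped onto the corresponding set of smallest values. -/
def SumDecomposable {n : ℕ} (π : Equiv.Perm (Fin n)) : Prop :=
  ∃ i : ℕ, 0 < i ∧ i < n ∧ ∀ j : Fin n, (j : ℕ) < i ↔ (π j : ℕ) < i

theorem sum_decomposable_av_2143_3142_246135_first_or_last_fixed
    (n : ℕ) (hn : 2 ≤ n) (π : Equiv.Perm (Fin n))
    (hdec : SumDecomposable π)
    (h1 : Avoids π p2143) (h2 : Avoids π p3142) (h3 : Avoids π p246135) :
    (π ⟨0, by omega⟩ : ℕ) = 0 ∨ (π ⟨n - 1, by omega⟩ : ℕ) = n - 1 := by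
  by_contra hcon
  push_neg at hcon
  obtain ⟨hfirst, hlast⟩ := hcon
  obtain ⟨i, hi0, hin, hiff⟩ := hdec
  have hz : (0:ℕ) < n := by omega
  have hLv : n - 1 < n := by omega
  set z : Fin n := ⟨0, hz⟩
  set L : Fin n := ⟨n - 1, hLv⟩
  set p := π.symm z with hpdef
  set q := π.symm L with hqdef
  have hπp : π p = z := π.apply_symm_apply z
  have hπq : π q = L := π.apply_symm_apply L
  have hπz_lt : (π z : ℕ) < i := (hiff z).mp hi0
  have hp_lt : (p : ℕ) < i := (hiff p).mpr (by rw [hπp]; exact hi0)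
  have hq_ge : i ≤ (q : ℕ) := by
    by_contra h
    push_neg at h
    have := (hiff q).mp h
    rw [hπq] at this
    simp only [L] at this
    omega
  have hπL_ge : i ≤ (π L : ℕ) := by
    by_contra h
    push_neg at h
    have := (hiff L).mpr h
    simp only [L] at this
    omega
  have hπL_lt : (π L : ℕ) < n - 1 := by
    have h1 : (π L : ℕ) < n := (π L).isLt
    have h2 : (π L : ℕ) ≠ n - 1 := hlast
    omega
  have hp_pos : 0 < (p : ℕ) := by
    rcases Nat.eq_zero_or_pos (p : ℕ) with h | h
    · exfalso
      have hpz : p = z := Fin.ext h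
      rw [hpz] at hπp
      exact hfirst (by rw [hπp])
    · exact h
  have hq_lt : (q : ℕ) < n - 1 := by
    have hq_le : (q : ℕ) ≤ n - 1 := by have := q.isLt; omega
    rcases lt_or_eq_of_le hq_le with h | h
    · exact h
    · exfalso
      have hqL : q = L := Fin.ext h
      rw [hqL] at hπq
      have : π L = L := hπq
      exact hlast (by rw [this])
  have hπp0 : (π p : ℕ) = 0 := by rw [hπp]
  have hπqn : (π q : ℕ) = n - 1 := by rw [hπq]
  have hπz_pos : 0 < (π z : ℕ) := Nat.pos_of_ne_zero hfirst
  have hπz_lt_n : (π z : ℕ) < n := (π z).isLt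
  clear hpdef hqdef hfirst hlast hiff
  apply h1
  have hzval : (z : ℕ) = 0 := rfl
  have hLval : (L : ℕ) = n - 1 := rfl
  have e0 : (![z, p, q, L] (⟨0, by omega⟩ : Fin 4)) = z := rfl
  have e1 : (![z, p, q, L] (⟨1, by omega⟩ : Fin 4)) = p := rfl
  have e2 : (![z, p, q, L] (⟨2, by omega⟩ : Fin 4)) = q := rfl
  have e3 : (![z, p, q, L] (⟨3, by omega⟩ : Fin 4)) = L := rfl
  have s0 : ((p2143 (⟨0, by omega⟩ : Fin 4)) : ℕ) = 1 := rfl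
  have s1 : ((p2143 (⟨1, by omega⟩ : Fin 4)) : ℕ) = 0 := rfl
  have s2 : ((p2143 (⟨2, by omega⟩ : Fin 4)) : ℕ) = 3 := rfl
  have s3 : ((p2143 (⟨3, by omega⟩ : Fin 4)) : ℕ) = 2 := rfl
  have v0 : ((⟨0, by omega⟩ : Fin 4) : ℕ) = 0 := rfl
  have v1 : ((⟨1, by omega⟩ : Fin 4) : ℕ) = 1 := rfl
  have v2 : ((⟨2, by omega⟩ : Fin 4) : ℕ) = 2 := rfl
  have v3 : ((⟨3, by omega⟩ : Fin 4) : ℕ) = 3 := rfl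
  refine ⟨![z, p, q, L], ?_, ?_⟩
  · intro a b hab
    fin_cases a <;> fin_cases b <;>
      simp only [Fin.lt_def, v0, v1, v2, v3, e0, e1, e2, e3, hzval, hLval] at hab ⊢ <;>
      omega
  · intro a b
    fin_cases a <;> fin_cases b <;>
      simp only [Fin.lt_def, s0, s1, s2, s3, e0, e1, e2, e3] <;>
      omega
end
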